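/- Let w ∈ W̃ be GL-permissible. Then for all m ∈ {1,…,2n} and all k ∈ ℤ/2nℤ: k ∈ K_m if and only if 2n−k ∉ K_{m*}; equivalently, K_{m*} = −(K_m)^c, where the complement is taken in ℤ/2nℤ. Consequently, if K_m is an interval [m̃, m), then K_{m*} is the interval [m̃*, m*); in particular m is proper if and only if m* is proper, and then the lower endpoint of K_{m*} is (m̃)*. -/

import Mathlib

open Finset

namespace OrthLM

/-- Membership in the cocharacter lattice `X` of the standard maximal torus of `GO_{2n}`:
integer vectors with `r_i + r_{i*}` independent of `i`. -/
def inX (n : ℕ) (v : Fin (2*n) → ℤ) : Prop :=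
  ∀ i j : Fin (2*n), v i + v i.rev = v j + v j.rev

/-- Membership in `S^h_{2n}`: permutations commuting with the involution `i ↦ i* = 2n+1-i`. -/
def inSh (n : ℕ) (σ : Equiv.Perm (Fin (2*n))) : Prop :=
  ∀ i, σ i.rev = (σ i).rev

/-- Membership in `W°`: elements of `S^h_{2n}` that are even as permutations. -/
def inW0 (n : ℕ) (σ : Equiv.Perm (Fin (2*n))) : Prop :=
  inSh n σ ∧ Equiv.Perm.sign σ = 1

/-- Elements of the ambient group of the Iwahori-Weyl group `W̃ = X ⋊ S^h_{2n}`,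
represented as pairs (translation part, finite part). -/
abbrev Wt (n : ℕ) := (Fin (2*n) → ℤ) × Equiv.Perm (Fin (2*n))

/-- Membership in the Iwahori-Weyl group `W̃ = X ⋊ S^h_{2n}`. -/
def inWt (n : ℕ) (w : Wt n) : Prop := inX n w.1 ∧ inSh n w.2

def wone (n : ℕ) : Wt n := (0, 1)

/-- Multiplication in `W̃` (compatible with the affine action `(v,σ)·x = v + σx`). -/
def wmul (n : ℕ) (w w' : Wt n) : Wt n :=
  (fun i => w.1 i + w'.1 (w.2⁻¹ i), w.2 * w'.2)

/-- Inversion in `W̃`. -/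
def winv (n : ℕ) (w : Wt n) : Wt n := (fun i => -(w.1 (w.2 i)), w.2⁻¹)

/-- The translation element `t_μ`. -/
def wtrans (n : ℕ) (μ : Fin (2*n) → ℤ) : Wt n := (μ, 1)

/-- A finite Weyl group element regarded in `W̃`. -/
def wperm (n : ℕ) (σ : Equiv.Perm (Fin (2*n))) : Wt n := (0, σ)

/-- The affine action of `W̃` on `ℤ^{2n}`: `(v,σ)·x = v + σx` with `(σx)(i) = x(σ⁻¹ i)`. -/
def wact (n : ℕ) (w : Wt n) (x : Fin (2*n) → ℤ) : Fin (2*n) → ℤ :=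
  fun i => w.1 i + x (w.2⁻¹ i)

/-- The affine action of `W̃` on `ℝ^{2n}`. -/
def wactR (n : ℕ) (w : Wt n) (x : Fin (2*n) → ℝ) : Fin (2*n) → ℝ :=
  fun i => (w.1 i : ℝ) + x (w.2⁻¹ i)

/-- The action of a permutation on vectors: `(σμ)(i) = μ(σ⁻¹ i)`. -/
def permAct (n : ℕ) (σ : Equiv.Perm (Fin (2*n))) (μ : Fin (2*n) → ℤ) : Fin (2*n) → ℤ :=
  fun i => μ (σ⁻¹ i)

/-- The cocharacter `μ₁ = (1^{(n)}, 0^{(n)})`. -/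
def mu1 (n : ℕ) : Fin (2*n) → ℤ := fun j => if (j:ℕ) < n then 1 else 0

/-- The cocharacter `μ₂ = (1^{(n-1)}, 0, 1, 0^{(n-1)})`. -/
def mu2 (n : ℕ) : Fin (2*n) → ℤ := fun j => if (j:ℕ) < n - 1 ∨ (j:ℕ) = n then 1 else 0

/-- The vertices `ω_k = ((-1)^{(k)}, 0^{(2n-k)})` of the standard extended alcove. -/
def om (n : ℕ) (k : ℕ) : Fin (2*n) → ℤ := fun j => if (j:ℕ) < k then -1 else 0

/-- The extended alcove `v_k = w·ω_k` of `w`. -/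
def valc (n : ℕ) (w : Wt n) (k : ℕ) : Fin (2*n) → ℤ := wact n w (om n k)

/-- The vector `μ_k^w = v_k - ω_k`. -/
def muk (n : ℕ) (w : Wt n) (k : ℕ) : Fin (2*n) → ℤ :=
  fun j => valc n w k j - om n k j

/-- The set `E_k^w = {j : μ_k^w(j) = 0}`. -/
def Ew (n : ℕ) (w : Wt n) (k : ℕ) : Finset (Fin (2*n)) :=
  univ.filter fun j => muk n w k j = 0

/-- `GL`-permissibility: `Σ v_0 = n` and `ω_k ≤ v_k ≤ ω_k + (1,…,1)` for `0 ≤ k ≤ 2n-1`. -/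
def GLperm (n : ℕ) (w : Wt n) : Prop :=
  (∑ j, valc n w 0 j) = (n : ℤ) ∧
  ∀ k < 2*n, ∀ j, om n k j ≤ valc n w k j ∧ valc n w k j ≤ om n k j + 1

/-- A vector `μ ∈ {0,1}^{2n}` is totally isotropic if `μ(j) + μ(j*) = 1` for all `j`. -/
def TotIso (n : ℕ) (μ : Fin (2*n) → ℤ) : Prop := ∀ j, μ j + μ j.rev = 1

/-- `μ`-spin-permissibility: `GL`-permissible and every totally isotropic `μ_k^w`
(for `0 ≤ k ≤ n`) lies in the `W°`-orbit of `μ`. -/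
def SpinPerm (n : ℕ) (μ : Fin (2*n) → ℤ) (w : Wt n) : Prop :=
  GLperm n w ∧ ∀ k ≤ n, TotIso n (muk n w k) →
    ∃ σ, inW0 n σ ∧ muk n w k = permAct n σ μ

/-- Membership in the coroot lattice `Q^∨`. -/
def inQv (n : ℕ) (v : Fin (2*n) → ℤ) : Prop :=
  inX n v ∧ (∀ i, v i + v i.rev = 0) ∧
  Even (∑ i ∈ univ.filter (fun i : Fin (2*n) => (i:ℕ) < n), v i)

/-- Membership in the affine Weyl group `W_a = Q^∨ ⋊ W°`. -/
def inWa (n : ℕ) (x : Wt n) : Prop := inQv n x.1 ∧ inW0 n x.2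

/-- The affine reflection `s_{i,j;d}` (for `j ∉ {i, i*}`), sending `x` to the vector with
`x_j + d` in slot `i`, `x_i - d` in slot `j`, `x_{i*} + d` in slot `j*`, `x_{j*} - d` in
slot `i*`. -/
def wrefl (n : ℕ) (i j : Fin (2*n)) (d : ℤ) : Wt n :=
  (fun l => if l = i then d else if l = j then -d else if l = j.rev then d
            else if l = i.rev then -d else 0,
   Equiv.swap i j * Equiv.swap i.rev j.rev)

/-- Successor modulo `2n` on representatives `{0,…,2n-1}` of `ℤ/2nℤ`. -/
def csucc (n : ℕ) (k : Fin (2*n)) : Fin (2*n) :=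
  ⟨((k:ℕ) + 1) % (2*n), Nat.mod_lt _ k.pos⟩

/-- Predecessor modulo `2n`. -/
def cpred (n : ℕ) (k : Fin (2*n)) : Fin (2*n) :=
  ⟨((k:ℕ) + (2*n - 1)) % (2*n), Nat.mod_lt _ k.pos⟩

/-- Negation modulo `2n`. -/
def cneg (n : ℕ) (k : Fin (2*n)) : Fin (2*n) :=
  ⟨(2*n - (k:ℕ)) % (2*n), Nat.mod_lt _ k.pos⟩

/-- The star involution on classes mod `2n`: the class of `m` goes to the class of
`m* = 2n+1-m`, i.e. `c ↦ 1 - c`. -/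
def cstar (n : ℕ) (k : Fin (2*n)) : Fin (2*n) := csucc n (cneg n k)

/-- The representative in `{1,…,2n}` of a class mod `2n`. -/
def pv (n : ℕ) (k : Fin (2*n)) : ℕ := if (k:ℕ) = 0 then 2*n else (k:ℕ)

/-- The cyclic interval `[a, b)` in `ℤ/2nℤ`. -/
def cyc (n : ℕ) (a b : Fin (2*n)) : Finset (Fin (2*n)) :=
  univ.filter fun k => ((k:ℕ) + 2*n - (a:ℕ)) % (2*n) < ((b:ℕ) + 2*n - (a:ℕ)) % (2*n)

/-- The set `K_m = {k ∈ ℤ/2nℤ : μ_k^w(m) = 0}` (indices `m` are 0-indexed: the slot `m`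
corresponds to the paper's `m+1 ∈ {1,…,2n}`; classes are represented by `{0,…,2n-1}`). -/
def Kset (n : ℕ) (w : Wt n) (m : Fin (2*n)) : Finset (Fin (2*n)) :=
  univ.filter fun k => muk n w (k:ℕ) m = 0

/-- The slot `m` is proper: `K_{m+1}` (paper indexing) is a cyclic interval `[m̃, m+1)`
with lower endpoint `m̃` different from the class of `m+1`. -/
def isProper (n : ℕ) (w : Wt n) (m : Fin (2*n)) : Prop :=
  ∃ mt, mt ≠ csucc n m ∧ Kset n w m = cyc n mt (csucc n m)

/-- The constraint cutting out `X ⊗ ℝ` inside `ℝ^{2n}`. -/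
def inXR (n : ℕ) (x : Fin (2*n) → ℝ) : Prop :=
  ∀ i j : Fin (2*n), x i + x i.rev = x j + x j.rev

/-- The closure (in `X ⊗ ℝ`, lifted to `ℝ^{2n}`) of the preimage `Ã` of the base alcove:
the points of `X ⊗ ℝ` on which every positive root `x_i - x_j`, `x_i + x_j - c(x)`
(`1 ≤ i < j ≤ n`) takes values in `[-1, 0]`. -/
def ClA (n : ℕ) : Set (Fin (2*n) → ℝ) :=
  {x | inXR n x ∧
       ∀ i j : Fin (2*n), i < j → (j:ℕ) < n →
         (-1 ≤ x i - x j ∧ x i - x j ≤ 0 ∧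
          -1 ≤ x i + x j - (x i + x i.rev) ∧ x i + x j - (x i + x i.rev) ≤ 0)}

/-- The stabilizer `Ω` in `W̃` of the base alcove. -/
def inOmega (n : ℕ) (w : Wt n) : Prop :=
  inWt n w ∧ (wactR n w) '' ClA n = ClA n

/-- The Coxeter generators of `W_a`: the reflections in the walls of the base alcove,
namely `s_{i,i+1;0}` for `1 ≤ i ≤ n-1`, `s_{n-1,n+1;0}`, and `s_{1,2n-1;-1}`
(paper 1-indexed; here 0-indexed). -/
def sgens (n : ℕ) (hn : 2 ≤ n) : Set (Wt n) :=
  {w | (∃ i : Fin (2*n), (i:ℕ) + 1 < n ∧ w = wrefl n i (csucc n i) 0) ∨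
       w = wrefl n ⟨n-2, by omega⟩ ⟨n, by omega⟩ 0 ∨
       w = wrefl n ⟨0, by omega⟩ ⟨2*n-2, by omega⟩ (-1)}

def wprod (n : ℕ) (L : List (Wt n)) : Wt n := L.foldr (wmul n) (wone n)

/-- A word in the Coxeter generators of `W_a`. -/
def isWord (n : ℕ) (hn : 2 ≤ n) (L : List (Wt n)) : Prop := ∀ s ∈ L, s ∈ sgens n hn

/-- The length function on `W̃`: `ℓ(xω) = ℓ(x)` for `x ∈ W_a`, `ω ∈ Ω`, where `ℓ(x)` is
the minimal length of a word in the Coxeter generators expressing `x`. -/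
noncomputable def lenW (n : ℕ) (hn : 2 ≤ n) (w : Wt n) : ℕ :=
  sInf {m | ∃ L ω, isWord n hn L ∧ L.length = m ∧ inOmega n ω ∧ w = wmul n (wprod n L) ω}

/-- The Bruhat order on `W̃`: `xω ≤ x'ω'` iff `ω = ω'` and `x ≤ x'` in `W_a`, the latter
expressed by the subword property for a reduced word of `x'`. -/
def wle (n : ℕ) (hn : 2 ≤ n) (w w' : Wt n) : Prop :=
  ∃ L ω, isWord n hn L ∧ inOmega n ω ∧ w' = wmul n (wprod n L) ω ∧
    L.length = lenW n hn w' ∧ ∃ L', L'.Sublist L ∧ w = wmul n (wprod n L') ω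

/-- Strict Bruhat order on `W̃`. -/
def wlt (n : ℕ) (hn : 2 ≤ n) (w w' : Wt n) : Prop := wle n hn w w' ∧ w ≠ w'

/-- The `μ`-admissible set `Adm°(μ)` for `G°`: `w ≤ σ t_μ σ⁻¹` for some `σ ∈ W°`. -/
def AdmO (n : ℕ) (hn : 2 ≤ n) (μ : Fin (2*n) → ℤ) (w : Wt n) : Prop :=
  ∃ σ, inW0 n σ ∧
    wle n hn w (wmul n (wperm n σ) (wmul n (wtrans n μ) (wperm n σ⁻¹)))

/-- The `μ`-admissible set `Adm(μ)` for `G`: `w ≤ σ t_μ σ⁻¹` for some `σ ∈ S^h_{2n}`. -/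
def AdmFull (n : ℕ) (hn : 2 ≤ n) (μ : Fin (2*n) → ℤ) (w : Wt n) : Prop :=
  ∃ σ, inSh n σ ∧
    wle n hn w (wmul n (wperm n σ) (wmul n (wtrans n μ) (wperm n σ⁻¹)))

/-- The element `τ = (n, n+1) ∈ S^h_{2n}` (paper 1-indexed). -/
def tau (n : ℕ) (hn : 2 ≤ n) : Equiv.Perm (Fin (2*n)) :=
  Equiv.swap ⟨n-1, by omega⟩ ⟨n, by omega⟩


section AuxK

lemma mod2' (N t : ℕ) (ht : t < 2*N) : t % N = t ∨ (t % N + N = t) := by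
  rcases Nat.lt_or_ge t N with h | h
  · left; exact Nat.mod_eq_of_lt h
  · right
    rw [Nat.mod_eq_sub_mod h, Nat.mod_eq_of_lt (by omega)]
    omega

variable {n : ℕ}

lemma sigma_inv_rev (w : Wt n) (hw : inSh n w.2) (m : Fin (2*n)) :
    w.2⁻¹ m.rev = (w.2⁻¹ m).rev := by
  apply w.2.injective
  rw [← Equiv.Perm.mul_apply, mul_inv_cancel, Equiv.Perm.one_apply, hw, ← Equiv.Perm.mul_apply,
    mul_inv_cancel, Equiv.Perm.one_apply]

lemma v_pair (w : Wt n) (hw : inWt n w) (hGL : GLperm n w) (m : Fin (2*n)) :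
    w.1 m + w.1 m.rev = 1 := by
  have h0 : 0 < n := by have := m.pos; omega
  have hsum : (∑ j, w.1 j) = (n : ℤ) := by
    have h := hGL.1
    simpa [valc, wact, om] using h
  have hrev : (∑ j : Fin (2*n), w.1 j.rev) = (n : ℤ) := by
    rw [← hsum]
    exact Fintype.sum_equiv Fin.revPerm _ _ (fun j => rfl)
  have h2 : (∑ j : Fin (2*n), (w.1 j + w.1 j.rev)) = (2*n) * (w.1 m + w.1 m.rev) := by
    rw [Finset.sum_congr rfl (fun i _ => hw.1 i m)]
    simp [Finset.card_univ]
  rw [Finset.sum_add_distrib, hsum, hrev] at h2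
  have hcan : (2*(n:ℤ)) * 1 = (2*(n:ℤ)) * (w.1 m + w.1 m.rev) := by
    push_cast at h2 ⊢; linarith
  have := mul_left_cancel₀ (a := (2*(n:ℤ))) (by positivity) hcan
  linarith

lemma muk_pair (w : Wt n) (hw : inWt n w) (hGL : GLperm n w) (k : ℕ) (hk : k < 2*n)
    (m : Fin (2*n)) : muk n w k m + muk n w ((2*n - k) % (2*n)) m.rev = 1 := by
  have hv := v_pair w hw hGL m
  have hs : w.2⁻¹ m.rev = (w.2⁻¹ m).rev := sigma_inv_rev w hw.2 m
  have ha : ((w.2⁻¹ m : Fin (2*n)) : ℕ) < 2*n := (w.2⁻¹ m).isLt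
  have hb : (m : ℕ) < 2*n := m.isLt
  simp only [muk, valc, wact, om, hs, Fin.val_rev]
  rcases Nat.eq_zero_or_pos k with rfl | hk0
  · simp only [Nat.sub_zero, Nat.mod_self, Nat.not_lt_zero, if_false]
    omega
  · rw [Nat.mod_eq_of_lt (by omega)]
    split_ifs <;> omega

lemma muk01 (w : Wt n) (hGL : GLperm n w) (k : ℕ) (hk : k < 2*n) (m : Fin (2*n)) :
    muk n w k m = 0 ∨ muk n w k m = 1 := by
  have h := hGL.2 k hk m
  simp only [muk] at *
  omega

lemma Kdual (w : Wt n) (hw : inWt n w) (hGL : GLperm n w) (m k : Fin (2*n)) :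
    k ∈ Kset n w m ↔ cneg n k ∉ Kset n w m.rev := by
  have h1 := muk_pair w hw hGL k k.isLt m
  have h2 := muk01 w hGL k k.isLt m
  have h3 := muk01 w hGL ((2*n - (k:ℕ)) % (2*n)) (Nat.mod_lt _ k.pos) m.rev
  simp only [Kset, mem_filter, mem_univ, true_and]
  show muk n w (k:ℕ) m = 0 ↔ ¬ muk n w ((2*n - (k:ℕ)) % (2*n)) m.rev = 0
  omega

lemma cneg_cneg (k : Fin (2*n)) : cneg n (cneg n k) = k := by
  have h0 := k.pos
  have hk := k.isLt
  apply Fin.ext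
  show (2*n - (2*n - (k:ℕ)) % (2*n)) % (2*n) = (k:ℕ)
  have e1 := mod2' (2*n) (2*n - (k:ℕ)) (by omega)
  have l1 : (2*n - (k:ℕ)) % (2*n) < 2*n := Nat.mod_lt _ h0
  have e2 := mod2' (2*n) (2*n - (2*n - (k:ℕ)) % (2*n)) (by omega)
  have l2 : (2*n - (2*n - (k:ℕ)) % (2*n)) % (2*n) < 2*n := Nat.mod_lt _ h0
  omega

lemma Kdual' (w : Wt n) (hw : inWt n w) (hGL : GLperm n w) (m x : Fin (2*n)) :
    x ∈ Kset n w m.rev ↔ cneg n x ∉ Kset n w m := by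
  have h := Kdual w hw hGL m (cneg n x)
  rw [cneg_cneg] at h
  tauto

lemma cstar_cstar (a : Fin (2*n)) : cstar n (cstar n a) = a := by
  have h0 := a.pos
  have hA := a.isLt
  apply Fin.ext
  show (((2*n - ((2*n - (a:ℕ)) % (2*n) + 1) % (2*n)) % (2*n)) + 1) % (2*n) = (a:ℕ)
  have e1 := mod2' (2*n) (2*n - (a:ℕ)) (by omega)
  have l1 : (2*n - (a:ℕ)) % (2*n) < 2*n := Nat.mod_lt _ h0
  have e2 := mod2' (2*n) ((2*n - (a:ℕ)) % (2*n) + 1) (by omega)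
  have l2 : ((2*n - (a:ℕ)) % (2*n) + 1) % (2*n) < 2*n := Nat.mod_lt _ h0
  have e3 := mod2' (2*n) (2*n - ((2*n - (a:ℕ)) % (2*n) + 1) % (2*n)) (by omega)
  have l3 : (2*n - ((2*n - (a:ℕ)) % (2*n) + 1) % (2*n)) % (2*n) < 2*n := Nat.mod_lt _ h0
  have e4 := mod2' (2*n) ((2*n - ((2*n - (a:ℕ)) % (2*n) + 1) % (2*n)) % (2*n) + 1) (by omega)
  have l4 : ((2*n - ((2*n - (a:ℕ)) % (2*n) + 1) % (2*n)) % (2*n) + 1) % (2*n) < 2*n :=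
    Nat.mod_lt _ h0
  rcases e1 with e1 | e1 <;> rcases e2 with e2 | e2 <;> rcases e3 with e3 | e3 <;>
    rcases e4 with e4 | e4 <;> omega

lemma cstar_csucc_rev (m : Fin (2*n)) : cstar n (csucc n m) = csucc n m.rev := by
  have h0 := m.pos
  have hM := m.isLt
  apply Fin.ext
  show ((2*n - ((m:ℕ) + 1) % (2*n)) % (2*n) + 1) % (2*n) = ((m.rev : ℕ) + 1) % (2*n)
  rw [Fin.val_rev]
  have e1 := mod2' (2*n) ((m:ℕ) + 1) (by omega)
  have l1 : ((m:ℕ) + 1) % (2*n) < 2*n := Nat.mod_lt _ h0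
  have e2 := mod2' (2*n) (2*n - ((m:ℕ) + 1) % (2*n)) (by omega)
  have l2 : (2*n - ((m:ℕ) + 1) % (2*n)) % (2*n) < 2*n := Nat.mod_lt _ h0
  have e3 := mod2' (2*n) ((2*n - ((m:ℕ) + 1) % (2*n)) % (2*n) + 1) (by omega)
  have l3 : ((2*n - ((m:ℕ) + 1) % (2*n)) % (2*n) + 1) % (2*n) < 2*n := Nat.mod_lt _ h0
  have e4 := mod2' (2*n) (2*n - ((m:ℕ) + 1) + 1) (by omega)
  have l4 : (2*n - ((m:ℕ) + 1) + 1) % (2*n) < 2*n := Nat.mod_lt _ h0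
  rcases e1 with e1 | e1 <;> rcases e2 with e2 | e2 <;> rcases e3 with e3 | e3 <;>
    rcases e4 with e4 | e4 <;> omega

set_option maxHeartbeats 1000000 in
lemma key_nat (n A M X : ℕ) (hn : 0 < n) (hA : A < 2*n) (hM : M < 2*n) (hX : X < 2*n)
    (hne : A ≠ (M+1) % (2*n)) :
    (¬ (((2*n - X) % (2*n) + (2*n) - A) % (2*n) < ((M+1) % (2*n) + (2*n) - A) % (2*n))) ↔
    ((X + (2*n) - ((2*n - A) % (2*n) + 1) % (2*n)) % (2*n) <
     ((2*n - (M+1) + 1) % (2*n) + (2*n) - ((2*n - A) % (2*n) + 1) % (2*n)) % (2*n)) := by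
  have h0 : 0 < 2*n := by omega
  have e1 := mod2' (2*n) (2*n - X) (by omega)
  have l1 : (2*n - X) % (2*n) < 2*n := Nat.mod_lt _ h0
  have e2 := mod2' (2*n) ((2*n - X) % (2*n) + (2*n) - A) (by omega)
  have l2 : ((2*n - X) % (2*n) + (2*n) - A) % (2*n) < 2*n := Nat.mod_lt _ h0
  have e3 := mod2' (2*n) (M+1) (by omega)
  have l3 : (M+1) % (2*n) < 2*n := Nat.mod_lt _ h0
  have e4 := mod2' (2*n) ((M+1) % (2*n) + (2*n) - A) (by omega)
  have l4 : ((M+1) % (2*n) + (2*n) - A) % (2*n) < 2*n := Nat.mod_lt _ h0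
  have e5 := mod2' (2*n) (2*n - A) (by omega)
  have l5 : (2*n - A) % (2*n) < 2*n := Nat.mod_lt _ h0
  have e6 := mod2' (2*n) ((2*n - A) % (2*n) + 1) (by omega)
  have l6 : ((2*n - A) % (2*n) + 1) % (2*n) < 2*n := Nat.mod_lt _ h0
  have e7 := mod2' (2*n) (X + (2*n) - ((2*n - A) % (2*n) + 1) % (2*n)) (by omega)
  have l7 : (X + (2*n) - ((2*n - A) % (2*n) + 1) % (2*n)) % (2*n) < 2*n := Nat.mod_lt _ h0
  have e8 := mod2' (2*n) (2*n - (M+1) + 1) (by omega)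
  have l8 : (2*n - (M+1) + 1) % (2*n) < 2*n := Nat.mod_lt _ h0
  have e9 := mod2' (2*n)
    ((2*n - (M+1) + 1) % (2*n) + (2*n) - ((2*n - A) % (2*n) + 1) % (2*n)) (by omega)
  have l9 : ((2*n - (M+1) + 1) % (2*n) + (2*n) - ((2*n - A) % (2*n) + 1) % (2*n)) % (2*n)
      < 2*n := Nat.mod_lt _ h0
  rcases e1 with e1 | e1 <;> rcases e3 with e3 | e3 <;> rcases e5 with e5 | e5 <;>
    rcases e6 with e6 | e6 <;> rcases e8 with e8 | e8 <;> omega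

lemma cyc_neg (hn : 2 ≤ n) (a m x : Fin (2*n)) (hne : a ≠ csucc n m) :
    (cneg n x ∉ cyc n a (csucc n m) ↔ x ∈ cyc n (cstar n a) (csucc n m.rev)) := by
  have hne' : (a:ℕ) ≠ ((m:ℕ)+1) % (2*n) := fun h => hne (Fin.ext h)
  have h := key_nat n (a:ℕ) (m:ℕ) (x:ℕ) (by omega) a.isLt m.isLt x.isLt hne'
  simp only [cyc, mem_filter, mem_univ, true_and]
  convert h using 2 <;> simp only [cneg, csucc, cstar, Fin.val_rev]

end AuxK

/-- (Duality for the sets `K_m`.)  Let `w ∈ W̃` be GL-permissible.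
Then for all slots `m` and classes `k`: `k ∈ K_m ↔ -k ∉ K_{m*}`; equivalently
`K_{m*} = -(K_m)ᶜ`.  Consequently if `K_m` is an interval `[m̃, m)` then `K_{m*}` is the
interval `[m̃*, m*)`, and `m` is proper iff `m*` is proper.  (Slot `m` has paper index
`(m:ℕ)+1` with class `csucc m`; the star on classes is `c ↦ 1 - c = cstar c`.) -/
theorem K_duality (n : ℕ) (hn : 2 ≤ n) (w : Wt n)
    (hw : inWt n w) (hGL : GLperm n w) :
    (∀ m k : Fin (2*n), k ∈ Kset n w m ↔ cneg n k ∉ Kset n w m.rev) ∧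
    (∀ m : Fin (2*n), Kset n w m.rev = ((Kset n w m)ᶜ).image (cneg n)) ∧
    (∀ m mt : Fin (2*n), mt ≠ csucc n m → Kset n w m = cyc n mt (csucc n m) →
      Kset n w m.rev = cyc n (cstar n mt) (csucc n m.rev)) ∧
    (∀ m : Fin (2*n), isProper n w m ↔ isProper n w m.rev) := by
  have P2 : ∀ m : Fin (2*n), Kset n w m.rev = ((Kset n w m)ᶜ).image (cneg n) := by
    intro m
    ext x
    rw [Kdual' w hw hGL m x]
    simp only [Finset.mem_image, Finset.mem_compl]
    constructor
    · intro h; exact ⟨cneg n x, h, cneg_cneg x⟩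
    · rintro ⟨y, hy, rfl⟩; rwa [cneg_cneg]
  have P3 : ∀ m mt : Fin (2*n), mt ≠ csucc n m → Kset n w m = cyc n mt (csucc n m) →
      Kset n w m.rev = cyc n (cstar n mt) (csucc n m.rev) := by
    intro m mt hne hK
    ext x
    rw [Kdual' w hw hGL m x, hK]
    exact cyc_neg hn mt m x hne
  have F : ∀ m : Fin (2*n), isProper n w m → isProper n w m.rev := by
    rintro m ⟨mt, hne, hK⟩
    refine ⟨cstar n mt, ?_, P3 m mt hne hK⟩
    intro h
    apply hne
    have h2 := congrArg (cstar n) h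
    rwa [cstar_cstar, ← cstar_csucc_rev, cstar_cstar] at h2
  exact ⟨fun m k => Kdual w hw hGL m k, P2, P3,
    fun m => ⟨F m, fun h => by have := F m.rev h; rwa [Fin.rev_rev] at this⟩⟩

end OrthLM
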